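/- The set W₊ = {(x,y,ẋ,ẏ) : E < E*, W(x,y) > 0} is invariant under the flow of the Hill's lunar problem. -/

import Mathlib

noncomputable def V (α x y : ℝ) : ℝ :=
  -((α + 2) / 2) * x ^ 2 - (α + 2) / (x ^ 2 + y ^ 2) ^ (α / 2)

noncomputable def Vx (α x y : ℝ) : ℝ := deriv (fun t => V α t y) x
noncomputable def Vy (α x y : ℝ) : ℝ := deriv (fun t => V α x t) y

noncomputable def W (α x y : ℝ) : ℝ :=
  (α + 2) * (x ^ 2 - α / (x ^ 2 + y ^ 2) ^ (α / 2))

noncomputable def E (α x y vx vy : ℝ) : ℝ := (1 / 2) * (vx ^ 2 + vy ^ 2) + V α x y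

noncomputable def Estar (α : ℝ) : ℝ := -(1 / 2) * (α + 2) ^ 2 * α ^ (-(α / (α + 2)))

lemma aux_pos {a b : ℝ} (h : (a, b) ≠ (0, 0)) : 0 < a ^ 2 + b ^ 2 := by
  have hne : a ≠ 0 ∨ b ≠ 0 := by
    by_contra hc
    push_neg at hc
    exact h (by simp [hc.1, hc.2])
  rcases hne with h' | h' <;> positivity

lemma slice_x (α a b : ℝ) (h : 0 < a ^ 2 + b ^ 2) :
    HasDerivAt (fun t => V α t b)
      (-((α + 2) / 2) * (2 * a) -
        (0 * ((a ^ 2 + b ^ 2) ^ (α / 2)) -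
          (α + 2) * (2 * a * (α / 2) * (a ^ 2 + b ^ 2) ^ (α / 2 - 1))) /
          ((a ^ 2 + b ^ 2) ^ (α / 2)) ^ 2) a := by
  have h0 : a ^ 2 + b ^ 2 ≠ 0 := ne_of_gt h
  have hu : (a ^ 2 + b ^ 2) ^ (α / 2) ≠ 0 := (Real.rpow_pos_of_pos h _).ne'
  have h1 : HasDerivAt (fun t : ℝ => t ^ 2 + b ^ 2) (2 * a) a := by
    simpa using (hasDerivAt_pow 2 a).add_const (b ^ 2)
  have h2 : HasDerivAt (fun t : ℝ => (t ^ 2 + b ^ 2) ^ (α / 2))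
      (2 * a * (α / 2) * (a ^ 2 + b ^ 2) ^ (α / 2 - 1)) a :=
    h1.rpow_const (Or.inl h0)
  have h3 := (hasDerivAt_const a (α + 2)).div h2 hu
  have h4 := ((hasDerivAt_pow 2 a).const_mul (-((α + 2) / 2))).sub h3
  have h5 : HasDerivAt (fun t : ℝ => V α t b)
      (-((α + 2) / 2) * (↑2 * a ^ (2 - 1)) -
        (0 * ((a ^ 2 + b ^ 2) ^ (α / 2)) -
          (α + 2) * (2 * a * (α / 2) * (a ^ 2 + b ^ 2) ^ (α / 2 - 1))) /
          ((a ^ 2 + b ^ 2) ^ (α / 2)) ^ 2) a := h4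
  convert h5 using 1
  norm_num

lemma slice_y (α a b : ℝ) (h : 0 < a ^ 2 + b ^ 2) :
    HasDerivAt (fun t => V α a t)
      (-((0 * ((a ^ 2 + b ^ 2) ^ (α / 2)) -
          (α + 2) * (2 * b * (α / 2) * (a ^ 2 + b ^ 2) ^ (α / 2 - 1))) /
          ((a ^ 2 + b ^ 2) ^ (α / 2)) ^ 2)) b := by
  have h0 : a ^ 2 + b ^ 2 ≠ 0 := ne_of_gt h
  have hu : (a ^ 2 + b ^ 2) ^ (α / 2) ≠ 0 := (Real.rpow_pos_of_pos h _).ne'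
  have h1 : HasDerivAt (fun t : ℝ => a ^ 2 + t ^ 2) (2 * b) b := by
    simpa using ((hasDerivAt_pow 2 b).const_add (a ^ 2))
  have h2 : HasDerivAt (fun t : ℝ => (a ^ 2 + t ^ 2) ^ (α / 2))
      (2 * b * (α / 2) * (a ^ 2 + b ^ 2) ^ (α / 2 - 1)) b :=
    h1.rpow_const (Or.inl h0)
  have h3 := (hasDerivAt_const b (α + 2)).div h2 hu
  have h4 := (hasDerivAt_const b (-((α + 2) / 2) * a ^ 2)).sub h3
  have h5 : HasDerivAt (fun t : ℝ => V α a t)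
      (0 - (0 * ((a ^ 2 + b ^ 2) ^ (α / 2)) -
          (α + 2) * (2 * b * (α / 2) * (a ^ 2 + b ^ 2) ^ (α / 2 - 1))) /
          ((a ^ 2 + b ^ 2) ^ (α / 2)) ^ 2) b := h4
  convert h5 using 1
  ring

lemma Vx_eq (α a b : ℝ) (h : 0 < a ^ 2 + b ^ 2) :
    Vx α a b = -(α + 2) * a +
      (α + 2) * (α * a * (a ^ 2 + b ^ 2) ^ (α / 2 - 1)) / ((a ^ 2 + b ^ 2) ^ (α / 2)) ^ 2 := by
  have hu : (a ^ 2 + b ^ 2) ^ (α / 2) ≠ 0 := (Real.rpow_pos_of_pos h _).ne'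
  rw [Vx, (slice_x α a b h).deriv]
  field_simp
  ring

lemma Vy_eq (α a b : ℝ) (h : 0 < a ^ 2 + b ^ 2) :
    Vy α a b =
      (α + 2) * (α * b * (a ^ 2 + b ^ 2) ^ (α / 2 - 1)) / ((a ^ 2 + b ^ 2) ^ (α / 2)) ^ 2 := by
  have hu : (a ^ 2 + b ^ 2) ^ (α / 2) ≠ 0 := (Real.rpow_pos_of_pos h _).ne'
  rw [Vy, (slice_y α a b h).deriv]
  field_simp
  ring

lemma V_comp {α : ℝ} {x y x' y' : ℝ → ℝ} {t : ℝ}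
    (hx : HasDerivAt x (x' t) t) (hy : HasDerivAt y (y' t) t)
    (h : 0 < (x t) ^ 2 + (y t) ^ 2) :
    HasDerivAt (fun s => V α (x s) (y s))
      (Vx α (x t) (y t) * x' t + Vy α (x t) (y t) * y' t) t := by
  have h0 : (x t) ^ 2 + (y t) ^ 2 ≠ 0 := ne_of_gt h
  have hu : ((x t) ^ 2 + (y t) ^ 2) ^ (α / 2) ≠ 0 := (Real.rpow_pos_of_pos h _).ne'
  have h1 : HasDerivAt (fun s => (x s) ^ 2 + (y s) ^ 2)
      (2 * x t * x' t + 2 * y t * y' t) t := by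
    refine ((hx.pow 2).add (hy.pow 2)).congr_deriv ?_
    push_cast
    ring
  have h2 : HasDerivAt (fun s => ((x s) ^ 2 + (y s) ^ 2) ^ (α / 2))
      ((2 * x t * x' t + 2 * y t * y' t) * (α / 2) *
        ((x t) ^ 2 + (y t) ^ 2) ^ (α / 2 - 1)) t :=
    h1.rpow_const (Or.inl h0)
  have h3 := (hasDerivAt_const t (α + 2)).div h2 hu
  have h4 := ((hx.pow 2).const_mul (-((α + 2) / 2))).sub h3
  have h5 : HasDerivAt (fun s => V α (x s) (y s))
      (-((α + 2) / 2) * (↑2 * x t ^ (2 - 1) * x' t) -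
        (0 * (((x t) ^ 2 + (y t) ^ 2) ^ (α / 2)) -
          (α + 2) * ((2 * x t * x' t + 2 * y t * y' t) * (α / 2) *
            ((x t) ^ 2 + (y t) ^ 2) ^ (α / 2 - 1))) /
          (((x t) ^ 2 + (y t) ^ 2) ^ (α / 2)) ^ 2) t := h4
  convert h5 using 1
  rw [Vx_eq α _ _ h, Vy_eq α _ _ h]
  field_simp
  ring

lemma W_zero_imp (α : ℝ) (hα : 0 < α) {a b : ℝ} (h : 0 < a ^ 2 + b ^ 2)
    (hW : W α a b = 0) (vx vy : ℝ) : Estar α ≤ E α a b vx vy := by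
  set s := a ^ 2 + b ^ 2 with hs
  have hs2 : (0 : ℝ) < s ^ (α / 2) := Real.rpow_pos_of_pos h _
  have h2 : (0 : ℝ) < α + 2 := by linarith
  have ha2 : a ^ 2 = α / s ^ (α / 2) := by
    rcases mul_eq_zero.mp hW with h' | h'
    · exact absurd h' h2.ne'
    · linarith [h']
  -- a^2 ≤ s
  have hle : α / s ^ (α / 2) ≤ s := by nlinarith [sq_nonneg b, ha2]
  have hαs : α ≤ s ^ (1 + α / 2) := by
    rw [Real.rpow_add h, Real.rpow_one]
    rw [div_le_iff₀ hs2] at hle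
    linarith
  have hp : (0 : ℝ) ≤ α / (α + 2) := by positivity
  have hkey : α ^ (α / (α + 2)) ≤ s ^ (α / 2) := by
    have := Real.rpow_le_rpow hα.le hαs hp
    rwa [← Real.rpow_mul h.le, show (1 + α / 2) * (α / (α + 2)) = α / 2 by
      field_simp; ring] at this
  have hap : (0 : ℝ) < α ^ (α / (α + 2)) := Real.rpow_pos_of_pos hα _
  have hV : V α a b = -((α + 2) ^ 2 / 2) / s ^ (α / 2) := by
    rw [V, ← hs, ha2]
    field_simp
    ring
  have hEstar : Estar α = -((α + 2) ^ 2 / 2) / α ^ (α / (α + 2)) := by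
    rw [Estar, Real.rpow_neg hα.le]
    field_simp
  have hdiv : (α + 2) ^ 2 / 2 / s ^ (α / 2) ≤ (α + 2) ^ 2 / 2 / α ^ (α / (α + 2)) := by
    gcongr
  have hkin : (0 : ℝ) ≤ (1 / 2) * (vx ^ 2 + vy ^ 2) := by positivity
  rw [hEstar, E, hV]
  have : -((α + 2) ^ 2 / 2) / α ^ (α / (α + 2)) ≤ -((α + 2) ^ 2 / 2) / s ^ (α / 2) := by
    rw [neg_div, neg_div]
    linarith
  linarith

/-- Invariance of `W₊ = {E < E*, W > 0}` under the flow of the Hill's lunar problem. -/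
theorem Wplus_invariant (α : ℝ) (hα : 0 < α) (I : Set ℝ) (hI : Convex ℝ I)
    (x y x' y' x'' y'' : ℝ → ℝ)
    (hx : ∀ t ∈ I, HasDerivAt x (x' t) t) (hy : ∀ t ∈ I, HasDerivAt y (y' t) t)
    (hx' : ∀ t ∈ I, HasDerivAt x' (x'' t) t) (hy' : ∀ t ∈ I, HasDerivAt y' (y'' t) t)
    (hne : ∀ t ∈ I, (x t, y t) ≠ (0, 0))
    (heq1 : ∀ t ∈ I, x'' t - 2 * y' t = -Vx α (x t) (y t))
    (heq2 : ∀ t ∈ I, y'' t + 2 * x' t = -Vy α (x t) (y t))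
    (t₀ : ℝ) (ht₀ : t₀ ∈ I)
    (hE0 : E α (x t₀) (y t₀) (x' t₀) (y' t₀) < Estar α)
    (hW0 : 0 < W α (x t₀) (y t₀)) :
    ∀ t ∈ I, E α (x t) (y t) (x' t) (y' t) < Estar α ∧ 0 < W α (x t) (y t) := by
  have hpos : ∀ t ∈ I, 0 < (x t) ^ 2 + (y t) ^ 2 := fun t ht => aux_pos (hne t ht)
  -- Energy has zero derivative along the trajectory
  have hEd : ∀ t ∈ I, HasDerivAt (fun s => E α (x s) (y s) (x' s) (y' s)) 0 t := by
    intro t ht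
    have hkin : HasDerivAt (fun s => (1 / 2 : ℝ) * ((x' s) ^ 2 + (y' s) ^ 2))
        ((1 / 2) * (2 * x' t * x'' t + 2 * y' t * y'' t)) t := by
      have := (((hx' t ht).pow 2).add ((hy' t ht).pow 2)).const_mul (1 / 2 : ℝ)
      refine this.congr_deriv ?_
      push_cast
      ring
    have hV := V_comp (α := α) (hx t ht) (hy t ht) (hpos t ht)
    have h := hkin.add hV
    have e1 : x'' t = 2 * y' t - Vx α (x t) (y t) := by linarith [heq1 t ht]
    have e2 : y'' t = -(2 * x' t) - Vy α (x t) (y t) := by linarith [heq2 t ht]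
    have : HasDerivAt (fun s => E α (x s) (y s) (x' s) (y' s))
        ((1 / 2) * (2 * x' t * x'' t + 2 * y' t * y'' t) +
          (Vx α (x t) (y t) * x' t + Vy α (x t) (y t) * y' t)) t := h
    convert this using 1
    rw [e1, e2]
    ring
  -- Energy is constant
  have hEc : ∀ t ∈ I, E α (x t) (y t) (x' t) (y' t) = E α (x t₀) (y t₀) (x' t₀) (y' t₀) := by
    intro t ht
    have hb := Convex.norm_image_sub_le_of_norm_hasDerivWithin_le
      (f := fun s => E α (x s) (y s) (x' s) (y' s)) (f' := fun _ => 0) (C := 0)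
      (fun s hs => (hEd s hs).hasDerivWithinAt) (fun s _ => by simp) hI ht₀ ht
    have : ‖E α (x t) (y t) (x' t) (y' t) - E α (x t₀) (y t₀) (x' t₀) (y' t₀)‖ ≤ 0 := by
      simpa using hb
    have := norm_le_zero_iff.mp this
    linarith [sub_eq_zero.mp this]
  -- Continuity of W along the trajectory
  have hxc : ContinuousOn x I := fun s hs => (hx s hs).continuousAt.continuousWithinAt
  have hyc : ContinuousOn y I := fun s hs => (hy s hs).continuousAt.continuousWithinAt
  have hr : ContinuousOn (fun s => (x s) ^ 2 + (y s) ^ 2) I := (hxc.pow 2).add (hyc.pow 2)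
  have hrp : ContinuousOn (fun s => ((x s) ^ 2 + (y s) ^ 2) ^ (α / 2)) I :=
    hr.rpow_const (fun s hs => Or.inl (hpos s hs).ne')
  have hWc : ContinuousOn (fun s => W α (x s) (y s)) I := by
    unfold W
    exact continuousOn_const.mul ((hxc.pow 2).sub (continuousOn_const.div hrp
      (fun s hs => (Real.rpow_pos_of_pos (hpos s hs) _).ne')))
  intro t ht
  refine ⟨by rw [hEc t ht]; exact hE0, ?_⟩
  by_contra hWt
  push_neg at hWt
  have hsub : Set.uIcc t₀ t ⊆ I := hI.ordConnected.uIcc_subset ht₀ ht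
  have h0mem : (0 : ℝ) ∈ Set.uIcc (W α (x t₀) (y t₀)) (W α (x t) (y t)) := by
    rw [Set.mem_uIcc]
    exact Or.inr ⟨hWt, hW0.le⟩
  obtain ⟨s, hsmem, hWs⟩ := intermediate_value_uIcc (hWc.mono hsub) h0mem
  have hsI : s ∈ I := hsub hsmem
  have hge := W_zero_imp α hα (hpos s hsI) hWs (x' s) (y' s)
  rw [hEc s hsI] at hge
  linarith
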